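/- For every H ∈ K_r(n) there exists a subfamily H' ⊆ H with at most O(n^{r+1}) hyperedges (specifically, |H'| ≤ the number of (r+1)-subsets of [n]) such that cl_r(H') = H. -/

import Mathlib

/-- A hypergraph on vertex set `Fin n`, identified with its family of hyperedges. -/
abbrev Family (n : ℕ) := Set (Finset (Fin n))

/-- Membership in the class `K_r(n)`: rules (k0), (k1), (k2). -/
def MemK (r n : ℕ) (E : Family n) : Prop :=
  (∀ X : Finset (Fin n), X.card ≤ r → X ∈ E) ∧
  (∀ A ∈ E, Aᶜ ∈ E) ∧
  (∀ A ∈ E, ∀ B ∈ E, r ≤ (A ∩ B).card → A ∪ B ∈ E)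

/-- Membership in the class `K⊥_r(n)`: only rules (k0) and (k1). -/
def MemKbot (r n : ℕ) (E : Family n) : Prop :=
  (∀ X : Finset (Fin n), X.card ≤ r → X ∈ E) ∧
  (∀ A ∈ E, Aᶜ ∈ E)

/-- Closure of `H` in `K_r(n)`: intersection of all members of `K_r(n)` containing `H`. -/
def clr (r n : ℕ) (H : Family n) : Family n :=
  ⋂₀ {E | MemK r n E ∧ H ⊆ E}

/-- Closure of `H` in `K⊥_r(n)`. -/
def clbot (r n : ℕ) (H : Family n) : Family n :=
  ⋂₀ {E | MemKbot r n E ∧ H ⊆ E}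

/-- `A` and `B` are `r`-orthogonal. -/
def Ortho (r n : ℕ) (A B : Finset (Fin n)) : Prop :=
  clr r n {A, B} = clbot r n {A, B}

/-- A family is `r`-cross-free if all pairs of members are `r`-orthogonal. -/
def CrossFree (r n : ℕ) (H : Family n) : Prop :=
  ∀ A ∈ H, ∀ B ∈ H, Ortho r n A B

theorem polynomial_representation (r n : ℕ) (H : Family n) (hH : MemK r n H) :
    ∃ H' : Family n, H' ⊆ H ∧ H'.ncard ≤ Nat.choose n (r + 1) ∧ clr r n H' = H := by
  classical
  obtain ⟨hk0, hk1, hk2⟩ := hH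
  have hUniv : (Finset.univ : Finset (Fin n)) ∈ H := by
    have h0 := hk0 ∅ (by simp)
    have := hk1 ∅ h0
    simpa using this
  -- minimum-cardinality member containing each X
  have hmin : ∀ X : Finset (Fin n),
      ∃ A, A ∈ H ∧ X ⊆ A ∧ ∀ B ∈ H, X ⊆ B → A.card ≤ B.card := by
    intro X
    have hne : {k | ∃ A, A ∈ H ∧ X ⊆ A ∧ A.card = k}.Nonempty :=
      ⟨_, Finset.univ, hUniv, Finset.subset_univ X, rfl⟩
    obtain ⟨A, hAH, hAX, hAc⟩ := Nat.sInf_mem hne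
    exact ⟨A, hAH, hAX, fun B hB hXB => hAc ▸ Nat.sInf_le ⟨B, hB, hXB, rfl⟩⟩
  choose m hmH hmX hmmin using hmin
  set H' : Family n := m '' {X : Finset (Fin n) | X.card = r + 1} with hH'
  have hsub : H' ⊆ H := by rintro _ ⟨X, _, rfl⟩; exact hmH X
  set E0 : Family n := clr r n H' with hE0
  have hE0H : E0 ⊆ H := Set.sInter_subset_of_mem ⟨⟨hk0, hk1, hk2⟩, hsub⟩
  have hH'E0 : H' ⊆ E0 := by
    intro x hx
    exact Set.mem_sInter.mpr fun E hE => hE.2 hx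
  have hE0K : MemK r n E0 := by
    refine ⟨?_, ?_, ?_⟩
    · intro X hX
      exact Set.mem_sInter.mpr fun E hE => hE.1.1 X hX
    · intro A hA
      exact Set.mem_sInter.mpr fun E hE => hE.1.2.1 A (Set.mem_sInter.mp hA E hE)
    · intro A hA B hB hc
      exact Set.mem_sInter.mpr fun E hE =>
        hE.1.2.2 A (Set.mem_sInter.mp hA E hE) B (Set.mem_sInter.mp hB E hE) hc
  -- key uncrossing: m X ⊆ A for X ⊆ A when A is "small"
  have hsubA : ∀ A ∈ H, 2 * A.card ≤ n + 1 →
      ∀ X : Finset (Fin n), X ⊆ A → X.card = r + 1 → m X ⊆ A := by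
    intro A hA h2 X hXA hXc
    have hmc : (m X).card ≤ A.card := hmmin X A hA hXA
    have hu : ((m X) ∪ A).card + ((m X) ∩ A).card = (m X).card + A.card :=
      Finset.card_union_add_card_inter _ _
    have hXi : X ⊆ m X ∩ A := Finset.subset_inter (hmX X) hXA
    have hXic : r + 1 ≤ (m X ∩ A).card := hXc ▸ Finset.card_le_card hXi
    have hun : (m X ∪ A).card ≤ n := by
      simpa using Finset.card_le_univ (m X ∪ A)
    have hcompl : r ≤ ((m X)ᶜ ∩ Aᶜ).card := by
      rw [← Finset.compl_union, Finset.card_compl, Fintype.card_fin]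
      omega
    have h1 : (m X)ᶜ ∪ Aᶜ ∈ H := hk2 _ (hk1 _ (hmH X)) _ (hk1 _ hA) hcompl
    have h2' : m X ∩ A ∈ H := by
      have := hk1 _ h1
      rwa [← Finset.compl_inter, compl_compl] at this
    have h3 : (m X).card ≤ (m X ∩ A).card := hmmin X _ h2' hXi
    have h4 : m X ∩ A = m X :=
      Finset.eq_of_subset_of_card_le Finset.inter_subset_left h3
    calc m X = m X ∩ A := h4.symm
    _ ⊆ A := Finset.inter_subset_right
  -- small members of H are in the closure
  have key : ∀ A ∈ H, 2 * A.card ≤ n + 1 → A ∈ E0 := by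
    intro A hA h2
    by_cases hr : A.card ≤ r
    · exact hE0K.1 A hr
    obtain ⟨R, hRA, hRc⟩ := Finset.exists_subset_card_eq (show r ≤ A.card by omega)
    set f : Fin n → Finset (Fin n) := fun a => m (insert a R) with hf
    have hfa : ∀ a ∈ A \ R, f a ∈ E0 ∧ f a ⊆ A ∧ R ⊆ f a := by
      intro a ha
      rw [Finset.mem_sdiff] at ha
      have hins : (insert a R).card = r + 1 := by
        rw [Finset.card_insert_of_notMem ha.2, hRc]
      have hia : insert a R ⊆ A := Finset.insert_subset ha.1 hRA
      refine ⟨hH'E0 ⟨insert a R, hins, rfl⟩, hsubA A hA h2 _ hia hins, ?_⟩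
      exact (Finset.subset_insert a R).trans (hmX _)
    have chain : ∀ T : Finset (Fin n), T ⊆ A \ R →
        R ∪ T.sup f ∈ E0 ∧ R ∪ T.sup f ⊆ A := by
      intro T
      induction T using Finset.induction_on with
      | empty =>
        intro _
        constructor
        · simpa using hE0K.1 R (le_of_eq hRc)
        · simpa using hRA
      | insert a T haT ih =>
        intro hsub'
        have ha : a ∈ A \ R := hsub' (Finset.mem_insert_self a T)
        have hT : T ⊆ A \ R := fun x hx => hsub' (Finset.mem_insert_of_mem hx)
        obtain ⟨hU, hUA⟩ := ih hT
        obtain ⟨hfE, hfA, hRf⟩ := hfa a ha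
        have hcap : r ≤ ((R ∪ T.sup f) ∩ f a).card := by
          have hsub2 : R ⊆ (R ∪ T.sup f) ∩ f a :=
            Finset.subset_inter Finset.subset_union_left hRf
          calc r = R.card := hRc.symm
          _ ≤ _ := Finset.card_le_card hsub2
        have hmem := hE0K.2.2 _ hU _ hfE hcap
        have heq : (R ∪ T.sup f) ∪ f a = R ∪ (insert a T).sup f := by
          rw [Finset.sup_insert]
          ext x
          simp only [Finset.mem_union, Finset.sup_eq_union]
          tauto
        constructor
        · rw [← heq]; exact hmem
        · rw [← heq]; exact Finset.union_subset hUA hfA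
    obtain ⟨hUE, hUA⟩ := chain (A \ R) (Finset.Subset.refl _)
    have hAU : A = R ∪ (A \ R).sup f := by
      apply Finset.Subset.antisymm _ hUA
      intro x hx
      by_cases hxR : x ∈ R
      · exact Finset.mem_union_left _ hxR
      · have hx' : x ∈ A \ R := Finset.mem_sdiff.mpr ⟨hx, hxR⟩
        apply Finset.mem_union_right
        have hxf : x ∈ f x := (hmX _) (Finset.mem_insert_self x R)
        exact Finset.mem_of_subset (Finset.le_sup hx') hxf
    rw [hAU]; exact hUE
  refine ⟨H', hsub, ?_, ?_⟩
  · have h1 : H'.ncard ≤ ({X : Finset (Fin n) | X.card = r + 1}).ncard :=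
      Set.ncard_image_le (Set.toFinite _)
    have h2 : ({X : Finset (Fin n) | X.card = r + 1} : Set (Finset (Fin n))) =
        ((Finset.univ.powersetCard (r + 1) : Finset (Finset (Fin n))) : Set (Finset (Fin n))) := by
      ext X
      simp [Finset.mem_powersetCard]
    rw [h2, Set.ncard_coe_finset, Finset.card_powersetCard] at h1
    simpa using h1
  · apply Set.Subset.antisymm hE0H
    intro A hA
    by_cases h2 : 2 * A.card ≤ n + 1
    · exact key A hA h2
    · have hAn : A.card ≤ n := by simpa using Finset.card_le_univ A
      have hAc : Aᶜ ∈ H := hk1 A hA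
      have h2c : 2 * Aᶜ.card ≤ n + 1 := by
        rw [Finset.card_compl, Fintype.card_fin]; omega
      have := hE0K.2.1 Aᶜ (key Aᶜ hAc h2c)
      rwa [compl_compl] at this
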